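/- Let a_1,…,a_{k+1} and b_1,…,b_{k+1} be real numbers all greater than −1, such that the non-increasing rearrangement of (b_i) is strictly majorized by the non-increasing rearrangement of (a_i): all partial sums of the sorted b's are at most those of the sorted a's, the total sums are equal, and the sequences are not rearrangements of one another. Then Σ_i ln(1 + b_i) > Σ_i ln(1 + a_i). -/

import Mathlib

lemma log_tangent_le {x y : ℝ} (hx : -1 < x) (hy : -1 < y) :
    Real.log (1 + x) ≤ Real.log (1 + y) + (1 + y)⁻¹ * (x - y) := by
  have hx' : (0:ℝ) < 1 + x := by linarith
  have hy' : (0:ℝ) < 1 + y := by linarith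
  have ht : (0:ℝ) < (1 + x) / (1 + y) := div_pos hx' hy'
  have h := Real.log_le_sub_one_of_pos ht
  rw [Real.log_div hx'.ne' hy'.ne'] at h
  have : (1 + x) / (1 + y) - 1 = (1 + y)⁻¹ * (x - y) := by
    field_simp
    ring
  linarith [this ▸ h]

lemma log_tangent_lt {x y : ℝ} (hx : -1 < x) (hy : -1 < y) (hxy : x ≠ y) :
    Real.log (1 + x) < Real.log (1 + y) + (1 + y)⁻¹ * (x - y) := by
  have hx' : (0:ℝ) < 1 + x := by linarith
  have hy' : (0:ℝ) < 1 + y := by linarith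
  have ht : (0:ℝ) < (1 + x) / (1 + y) := div_pos hx' hy'
  have ht1 : (1 + x) / (1 + y) ≠ 1 := by
    intro h
    rw [div_eq_one_iff_eq hy'.ne'] at h
    exact hxy (by linarith)
  have h := Real.log_lt_sub_one_of_pos ht ht1
  rw [Real.log_div hx'.ne' hy'.ne'] at h
  have : (1 + x) / (1 + y) - 1 = (1 + y)⁻¹ * (x - y) := by
    field_simp
    ring
  linarith [this ▸ h]

/-- Strict Karamata inequality for the strictly concave function `log (1 + ·)` on
`(-1, ∞)`: if the non-increasing sequence `b` is strictly majorized by the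
non-increasing sequence `a`, then `∑ log (1 + b i) > ∑ log (1 + a i)`. -/
theorem karamata_log (k : ℕ) (a b : ℕ → ℝ)
    (ha1 : ∀ i ≤ k, -1 < a i) (hb1 : ∀ i ≤ k, -1 < b i)
    (haMono : ∀ i j, i ≤ j → j ≤ k → a j ≤ a i)
    (hbMono : ∀ i j, i ≤ j → j ≤ k → b j ≤ b i)
    (hmaj : ∀ s ≤ k + 1, ∑ i ∈ Finset.range s, b i ≤ ∑ i ∈ Finset.range s, a i)
    (hsum : ∑ i ∈ Finset.range (k + 1), b i = ∑ i ∈ Finset.range (k + 1), a i)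
    (hne : ∃ i ≤ k, a i ≠ b i) :
    ∑ i ∈ Finset.range (k + 1), Real.log (1 + b i) >
      ∑ i ∈ Finset.range (k + 1), Real.log (1 + a i) := by
  set c : ℕ → ℝ := fun i => (1 + b i)⁻¹ with hc
  set g : ℕ → ℝ := fun i => a i - b i with hg
  -- step 1: strict comparison with the tangent-line sum
  have step1 : ∑ i ∈ Finset.range (k + 1), Real.log (1 + a i) <
      ∑ i ∈ Finset.range (k + 1), (Real.log (1 + b i) + c i * g i) := by
    obtain ⟨j, hj, hjne⟩ := hne
    refine Finset.sum_lt_sum (fun i hi => ?_) ⟨j, Finset.mem_range.mpr (Nat.lt_succ_of_le hj), ?_⟩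
    · have hi' := Nat.lt_succ_iff.mp (Finset.mem_range.mp hi)
      exact log_tangent_le (ha1 i hi') (hb1 i hi')
    · exact log_tangent_lt (ha1 j hj) (hb1 j hj) hjne
  -- step 2: the tangent correction is nonpositive, by Abel summation
  have hparts := Finset.sum_range_by_parts c g (k + 1)
  simp only [smul_eq_mul, Nat.add_sub_cancel] at hparts
  have hG : ∑ i ∈ Finset.range (k + 1), g i = 0 := by
    simp only [hg, Finset.sum_sub_distrib]
    linarith [hsum]
  have step2 : ∑ i ∈ Finset.range (k + 1), c i * g i ≤ 0 := by
    rw [hparts, hG, mul_zero, zero_sub, neg_nonpos]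
    refine Finset.sum_nonneg (fun i hi => ?_)
    have hik : i < k := Finset.mem_range.mp hi
    have hb0 : (0:ℝ) < 1 + b i := by linarith [hb1 i hik.le]
    have hb1' : (0:ℝ) < 1 + b (i + 1) := by linarith [hb1 (i + 1) hik]
    have hcm : c i ≤ c (i + 1) := by
      apply inv_anti₀ hb1'
      have := hbMono i (i + 1) (Nat.le_succ i) hik
      linarith
    have hGnn : 0 ≤ ∑ j ∈ Finset.range (i + 1), g j := by
      simp only [hg, Finset.sum_sub_distrib, sub_nonneg]
      exact hmaj (i + 1) (by omega)
    exact mul_nonneg (by linarith) hGnn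
  rw [Finset.sum_add_distrib] at step1
  linarith
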